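/- For all integers d ≥ 1, k ≥ 1 and all integers r, s_Y, s_Z, m_Y, m_Z, m_W with 0 ≤ r ≤ k, 0 ≤ s_Y ≤ k, 0 ≤ s_Z ≤ min(k−r, k−s_Y), 0 ≤ m_Y ≤ k, 0 ≤ m_Z ≤ min(k−r, k−m_Y), 0 ≤ m_W ≤ min(k−s, k−m_Y−m_Z), setting s := s_Y + s_Z and m := m_Y + m_Z + m_W, one has ∫_{(B)^{4k−r−s−m}} h_1(y_0,…,y_{k−1}) · h_1(y_0,…,y_{r−1}, z_0,…,z_{k−r−1}) · h_1(y_0,…,y_{s_Y−1}, z_0,…,z_{s_Z−1}, w_0,…,w_{k−s−1}) · h_1(y_0,…,y_{m_Y−1}, z_0,…,z_{m_Z−1}, w_0,…,w_{m_W−1}, u_0,…,u_{k−m−1}) dy dz dw du ≤ ( (k+1)(k−r+1)(k−s+1)(k−m+1) )^d, where B := [−1,1]^d ⊂ ℝ^d. -/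

import Mathlib

open MeasureTheory

open Classical in
/-- The indicator of a proposition, as a real number. -/
noncomputable def ind (p : Prop) : ℝ := if p then 1 else 0

/-- All points of a set `P ⊆ ℝ^d` (with the sup norm) are pairwise within distance `δ`. -/
def closeP {d : ℕ} (δ : ℝ) (P : Set (Fin d → ℝ)) : Prop :=
  ∀ a ∈ P, ∀ b ∈ P, ‖a - b‖ ≤ δ

lemma ind_nonneg (p : Prop) : 0 ≤ ind p := by
  classical
  by_cases h : p <;> simp [ind, h]

lemma ind_le_one (p : Prop) : ind p ≤ 1 := by
  classical
  by_cases h : p <;> simp [ind, h]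

lemma ind_of (h : p) : ind p = 1 := by simp [ind, h]

lemma ind_of_not (h : ¬ p) : ind p = 0 := by simp [ind, h]

lemma ind_congr {p q : Prop} (h : p ↔ q) : ind p = ind q := by
  classical
  by_cases hp : p
  · rw [ind_of hp, ind_of (h.1 hp)]
  · rw [ind_of_not hp, ind_of_not (fun hq => hp (h.2 hq))]

lemma ind_mono {p q : Prop} (h : p → q) : ind p ≤ ind q := by
  classical
  by_cases hp : p
  · rw [ind_of hp, ind_of (h hp)]
  · rw [ind_of_not hp]; exact ind_nonneg q

lemma ind_mul_ind (p q : Prop) : ind p * ind q = ind (p ∧ q) := by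
  classical
  by_cases hp : p <;> by_cases hq : q <;> simp [ind, hp, hq]

lemma prod_ind {ι : Type*} [Fintype ι] (P : ι → Prop) :
    (∏ i, ind (P i)) = ind (∀ i, P i) := by
  classical
  by_cases h : ∀ i, P i
  · rw [ind_of h, Finset.prod_eq_one]
    exact fun i _ => ind_of (h i)
  · rw [ind_of_not h]
    push_neg at h
    obtain ⟨i, hi⟩ := h
    exact Finset.prod_eq_zero (Finset.mem_univ i) (ind_of_not hi)

lemma ind_indicator {α : Type*} (s : Set α) (x : α) :
    ind (x ∈ s) = s.indicator (fun _ => (1:ℝ)) x := by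
  classical
  by_cases h : x ∈ s <;> simp [ind, h]

lemma measurable_ind {α : Type*} [MeasurableSpace α] {P : α → Prop}
    (h : MeasurableSet {x | P x}) : Measurable fun x => ind (P x) := by
  have : (fun x => ind (P x)) = Set.indicator {x | P x} (fun _ => (1:ℝ)) := by
    funext x; exact ind_indicator _ x
  rw [this]
  exact (measurable_const).indicator h

lemma integrable_ind {α : Type*} [MeasureSpace α] {P : α → Prop}
    (h : MeasurableSet {x | P x}) (hfin : volume {x | P x} < ⊤) :
    Integrable (fun x => ind (P x)) := by
  have : (fun x => ind (P x)) = Set.indicator {x | P x} (fun _ => (1:ℝ)) := by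
    funext x; exact ind_indicator _ x
  rw [this]
  exact (integrable_indicator_iff h).2 (integrableOn_const hfin.ne)

lemma integral_ind {α : Type*} [MeasureSpace α] {P : α → Prop}
    (h : MeasurableSet {x | P x}) :
    ∫ x, ind (P x) = (volume {x | P x}).toReal := by
  have : (fun x => ind (P x)) = Set.indicator {x | P x} (fun _ => (1:ℝ)) := by
    funext x; exact ind_indicator _ x
  rw [this, integral_indicator_const _ h]
  simp; rfl

open MeasureTheory Set in
noncomputable def swapME (n d : ℕ) : (Fin n → Fin d → ℝ) ≃ᵐ (Fin d → Fin n → ℝ) where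
  toEquiv := Equiv.piComm fun (_ : Fin n) (_ : Fin d) => ℝ
  measurable_toFun := measurable_pi_lambda _ fun c => measurable_pi_lambda _ fun i =>
    (measurable_pi_apply c).comp (measurable_pi_apply i)
  measurable_invFun := measurable_pi_lambda _ fun i => measurable_pi_lambda _ fun c =>
    (measurable_pi_apply i).comp (measurable_pi_apply c)

lemma swapME_apply {n d : ℕ} (y : Fin n → Fin d → ℝ) (c : Fin d) (i : Fin n) :
    swapME n d y c i = y i c := rfl

open MeasureTheory Set in
lemma swapMP (n d : ℕ) : MeasurePreserving (swapME n d) volume volume := by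
  refine ⟨(swapME n d).measurable, ?_⟩
  have hvol : (volume : Measure (Fin d → Fin n → ℝ)) = Measure.pi fun _ => volume :=
    volume_pi
  rw [hvol]
  set C : Set (Set (Fin n → ℝ)) :=
    Set.pi univ '' Set.pi univ fun _ : Fin n => {s : Set ℝ | MeasurableSet s} with hC
  have hspan : (volume : Measure (Fin n → ℝ)).FiniteSpanningSetsIn C := by
    refine ⟨fun j => univ.pi fun _ : Fin n => Icc (-(j:ℝ)) j,
      fun j => ⟨fun _ => Icc (-(j:ℝ)) j, fun i _ => (measurableSet_Icc : MeasurableSet (Icc (-(j:ℝ)) (j:ℝ))), rfl⟩,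
      fun j => ?_, ?_⟩
    · rw [volume_pi, Measure.pi_pi]
      exact ENNReal.prod_lt_top fun i _ => by simp [Real.volume_Icc]
    · ext y
      simp only [mem_iUnion, mem_univ, iff_true, mem_pi, mem_Icc]
      obtain ⟨j, hj⟩ := exists_nat_ge ‖y‖
      refine ⟨j, fun i _ => ?_⟩
      have := (abs_le.1 ((norm_le_pi_norm y i).trans hj))
      simpa using this
  symm
  refine Measure.pi_eq_generateFrom (fun _ => ?_) (fun _ => IsPiSystem.pi fun _ =>
    MeasurableSpace.isPiSystem_measurableSet) (fun _ => hspan) ?_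
  · exact generateFrom_pi
  · intro s hs
    choose t ht hts using hs
    have hmeas : ∀ c, MeasurableSet (s c) := by
      intro c
      rw [← hts c]
      exact MeasurableSet.univ_pi fun i => ht c i (mem_univ i)
    rw [MeasurableEquiv.map_apply]
    have hpre : swapME n d ⁻¹' (univ.pi s) =
        univ.pi fun i : Fin n => univ.pi fun c : Fin d => t c i := by
      ext y
      simp only [mem_preimage, mem_pi, mem_univ, forall_true_left, true_implies]
      constructor
      · intro h i c
        have h2 := h c
        rw [← hts c] at h2
        exact h2 i (mem_univ i)
      · intro h c
        rw [← hts c]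
        exact fun i _ => h i c
    rw [hpre]
    have h3 : ∀ c, (volume : Measure (Fin n → ℝ)) (s c) = ∏ i, volume (t c i) := by
      intro c
      rw [← hts c, volume_pi, Measure.pi_pi]
    simp_rw [h3]
    have h4 : (volume : Measure (Fin n → Fin d → ℝ))
        (univ.pi fun i => univ.pi fun c => t c i)
        = ∏ i : Fin n, ∏ c : Fin d, volume (t c i) := by
      rw [volume_pi, Measure.pi_pi]
      exact Finset.prod_congr rfl fun i _ => by rw [volume_pi, Measure.pi_pi]
    rw [h4, Finset.prod_comm]

open MeasureTheory Set

noncomputable def Kf (t u : ℝ) : ℝ := ind ((t ≤ u ∧ u ≤ t + 1) ∧ u ∈ Icc (-1:ℝ) 1)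

lemma Kf_nonneg (t u : ℝ) : 0 ≤ Kf t u := ind_nonneg _

noncomputable def gf (t : ℝ) : ℝ := ∫ u, Kf t u

lemma gf_nonneg (t : ℝ) : 0 ≤ gf t := integral_nonneg fun u => Kf_nonneg t u

lemma integrable_ind_Icc (a b : ℝ) : Integrable (fun u : ℝ => ind (u ∈ Icc a b)) := by
  refine integrable_ind (P := fun u => u ∈ Icc a b) measurableSet_Icc ?_
  simp only [setOf_mem_eq, Real.volume_Icc]
  exact ENNReal.ofReal_lt_top

lemma integral_ind_Icc (a b : ℝ) (hab : a ≤ b) : ∫ u : ℝ, ind (u ∈ Icc a b) = b - a := by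
  rw [integral_ind (P := fun u => u ∈ Icc a b) measurableSet_Icc]
  simp only [setOf_mem_eq, Real.volume_Icc]
  rw [ENNReal.toReal_ofReal (by linarith)]

lemma gf_le_one (t : ℝ) : gf t ≤ 1 := by
  have h := integral_mono_of_nonneg (Filter.Eventually.of_forall fun u => Kf_nonneg t u)
    (integrable_ind_Icc t (t+1))
    (Filter.Eventually.of_forall fun u => ind_mono (fun h => h.1))
  calc gf t ≤ ∫ u : ℝ, ind (u ∈ Icc t (t+1)) := h
    _ = 1 := by rw [integral_ind_Icc _ _ (by linarith)]; ring

lemma gf_le_sub (t : ℝ) (ht : t ≤ 1) : gf t ≤ 1 - t := by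
  have h := integral_mono_of_nonneg (Filter.Eventually.of_forall fun u => Kf_nonneg t u)
    (integrable_ind_Icc t 1)
    (Filter.Eventually.of_forall fun u => ind_mono (fun h => ⟨h.1.1, h.2.2⟩))
  calc gf t ≤ ∫ u : ℝ, ind (u ∈ Icc t 1) := h
    _ = 1 - t := integral_ind_Icc _ _ ht

lemma term_bound (m : ℕ) (i : Fin (m+1)) :
    ∫ v : Fin (m+1) → ℝ, ∏ j, Kf (v i) (v j) ≤ 1 + 1/((m:ℝ)+1) := by
  set F : ℝ × (Fin m → ℝ) → ℝ := fun p => Kf p.1 p.1 * ∏ j', Kf p.1 (p.2 j') with hF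
  have mp : MeasurePreserving (MeasurableEquiv.piFinSuccAbove (fun _ : Fin (m+1) => ℝ) i)
      volume volume := by
    have mp0 := measurePreserving_piFinSuccAbove (fun _ : Fin (m+1) => (volume : Measure ℝ)) i
    simpa only [← volume_pi, ← Measure.volume_eq_prod] using mp0
  have key : ∀ v : Fin (m+1) → ℝ, F ((MeasurableEquiv.piFinSuccAbove (fun _ : Fin (m+1) => ℝ) i) v)
      = ∏ j, Kf (v i) (v j) := by
    intro v
    rw [Fin.prod_univ_succAbove (fun j => Kf (v i) (v j)) i]
    simp only [hF, MeasurableEquiv.piFinSuccAbove_apply]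
    rfl
  have hFind : ∀ p : ℝ × (Fin m → ℝ), F p =
      ind (((p.1 ≤ p.1 ∧ p.1 ≤ p.1 + 1) ∧ p.1 ∈ Icc (-1:ℝ) 1) ∧
        ∀ j', ((p.1 ≤ p.2 j' ∧ p.2 j' ≤ p.1 + 1) ∧ p.2 j' ∈ Icc (-1:ℝ) 1)) := by
    intro p
    rw [hF]
    simp only [Kf]
    rw [prod_ind, ind_mul_ind]
  have hmeasset : MeasurableSet {p : ℝ × (Fin m → ℝ) |
      ((p.1 ≤ p.1 ∧ p.1 ≤ p.1 + 1) ∧ p.1 ∈ Icc (-1:ℝ) 1) ∧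
        ∀ j', ((p.1 ≤ p.2 j' ∧ p.2 j' ≤ p.1 + 1) ∧ p.2 j' ∈ Icc (-1:ℝ) 1)} := by
    rw [setOf_and]
    refine MeasurableSet.inter ?_ ?_
    · rw [setOf_and]
      refine MeasurableSet.inter ?_ ?_
      · rw [setOf_and]
        exact (measurableSet_le measurable_fst measurable_fst).inter
          (measurableSet_le measurable_fst (measurable_fst.add_const 1))
      · exact measurable_fst measurableSet_Icc
    · rw [setOf_forall]
      refine MeasurableSet.iInter fun j' => ?_
      have hj : Measurable fun p : ℝ × (Fin m → ℝ) => p.2 j' :=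
        (measurable_pi_apply j').comp measurable_snd
      rw [setOf_and, setOf_and]
      exact ((measurableSet_le measurable_fst hj).inter
        (measurableSet_le hj (measurable_fst.add_const 1))).inter (hj measurableSet_Icc)
  have hint : Integrable F := by
    have := integrable_ind hmeasset ?_
    · exact (by rw [funext hFind]; exact this)
    · refine lt_of_le_of_lt (measure_mono ?_)
        (?_ : volume ((Icc (-1:ℝ) 1) ×ˢ (univ.pi fun _ : Fin m => Icc (-1:ℝ) 1)) < ⊤)
      · rintro p hp
        exact ⟨hp.1.2, fun j' _ => (hp.2 j').2⟩
      · rw [Measure.volume_eq_prod, Measure.prod_prod, volume_pi, Measure.pi_pi]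
        simp only [Real.volume_Icc]
        refine ENNReal.mul_lt_top ENNReal.ofReal_lt_top (ENNReal.prod_lt_top ?_)
        exact fun _ _ => ENNReal.ofReal_lt_top
  have step1 : ∫ v : Fin (m+1) → ℝ, ∏ j, Kf (v i) (v j) = ∫ t : ℝ, Kf t t * gf t ^ m := by
    have e1 : ∫ v : Fin (m+1) → ℝ, ∏ j, Kf (v i) (v j)
        = ∫ p : ℝ × (Fin m → ℝ), F p := by
      rw [← mp.integral_comp']
      exact integral_congr_ae (Filter.Eventually.of_forall fun v => (key v).symm)
    rw [e1, Measure.volume_eq_prod, integral_prod _ (by rwa [← Measure.volume_eq_prod])]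
    refine integral_congr_ae (Filter.Eventually.of_forall fun t => ?_)
    simp only [hF]
    rw [integral_const_mul, volume_pi, MeasureTheory.integral_fintype_prod_eq_pow (ι := Fin m) (Kf t),
      Fintype.card_fin]
    rfl
  rw [step1]
  set b : ℝ → ℝ := fun t => Set.indicator (Icc (-1:ℝ) 0) (fun _ => (1:ℝ)) t
    + Set.indicator (Ioc (0:ℝ) 1) (fun t => (1-t)^m) t with hb
  have hb1 : Integrable (Set.indicator (Icc (-1:ℝ) 0) (fun _ => (1:ℝ))) :=
    (integrable_indicator_iff measurableSet_Icc).2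
      (integrableOn_const (by simp [Real.volume_Icc]))
  have hb2 : Integrable (Set.indicator (Ioc (0:ℝ) 1) (fun t : ℝ => (1-t)^m)) :=
    (integrable_indicator_iff measurableSet_Ioc).2
      (((continuous_const.sub continuous_id).pow m).integrableOn_Ioc)
  have hmono : ∫ t : ℝ, Kf t t * gf t ^ m ≤ ∫ t : ℝ, b t := by
    refine integral_mono_of_nonneg (Filter.Eventually.of_forall fun t =>
      mul_nonneg (Kf_nonneg t t) (pow_nonneg (gf_nonneg t) m)) (hb1.add hb2)
      (Filter.Eventually.of_forall fun t => ?_)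
    show Kf t t * gf t ^ m ≤ (Icc (-1:ℝ) 0).indicator (fun _ => (1:ℝ)) t
      + (Ioc (0:ℝ) 1).indicator (fun s => (1-s)^m) t
    by_cases h1 : t ∈ Icc (-1:ℝ) 1
    · have hK : Kf t t = 1 := ind_of ⟨⟨le_refl t, by linarith⟩, h1⟩
      by_cases h2 : t ≤ 0
      · have hmem : t ∈ Icc (-1:ℝ) 0 := ⟨h1.1, h2⟩
        have hnot : t ∉ Ioc (0:ℝ) 1 := fun h => absurd h.1 (not_lt.2 h2)
        rw [indicator_of_mem hmem, indicator_of_notMem hnot, hK, one_mul]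
        have := pow_le_one₀ (gf_nonneg t) (gf_le_one t) (n := m)
        linarith
      · have hmem : t ∈ Ioc (0:ℝ) 1 := ⟨lt_of_not_ge h2, h1.2⟩
        have hnot : t ∉ Icc (-1:ℝ) 0 := fun h => absurd h.2 (not_le.2 (lt_of_not_ge h2))
        rw [indicator_of_mem hmem, indicator_of_notMem hnot, hK, one_mul, zero_add]
        exact pow_le_pow_left₀ (gf_nonneg t) (gf_le_sub t h1.2) m
    · have hK : Kf t t = 0 := ind_of_not (fun h => h1 h.2)
      rw [hK, zero_mul]
      refine add_nonneg (indicator_nonneg (fun _ _ => zero_le_one) t)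
        (indicator_nonneg (fun s hs => pow_nonneg (by linarith [hs.2]) m) t)
  refine hmono.trans ?_
  rw [hb]
  have := integral_add hb1 hb2
  rw [this]
  have e2 : ∫ t : ℝ, Set.indicator (Icc (-1:ℝ) 0) (fun _ => (1:ℝ)) t = 1 := by
    rw [integral_indicator_const _ measurableSet_Icc]
    simp [Real.volume_Icc]
  have e3 : ∫ t : ℝ, Set.indicator (Ioc (0:ℝ) 1) (fun t : ℝ => (1-t)^m) t = 1/((m:ℝ)+1) := by
    rw [integral_indicator measurableSet_Ioc,
      ← intervalIntegral.integral_of_le (by norm_num : (0:ℝ) ≤ 1)]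
    have := intervalIntegral.integral_comp_sub_left (a := (0:ℝ)) (b := 1)
      (fun s : ℝ => s ^ m) 1
    rw [this]
    norm_num [integral_pow]
  rw [e2, e3]

open MeasureTheory Set in
lemma core1 (n : ℕ) :
    ∫ v : Fin n → ℝ, (ind (∀ i j : Fin n, |v i - v j| ≤ 1) * ∏ i, ind (v i ∈ Icc (-1:ℝ) 1))
      ≤ (n:ℝ) + 1 := by
  induction n with
  | zero =>
      have h : (fun v : Fin 0 → ℝ => ind (∀ i j : Fin 0, |v i - v j| ≤ 1) *
          ∏ i, ind (v i ∈ Icc (-1:ℝ) 1)) = fun _ => (1:ℝ) := by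
        funext v
        rw [ind_of (fun i => i.elim0)]
        simp
      rw [h, integral_const]
      have hv : (volume : Measure (Fin 0 → ℝ)) Set.univ = 1 := by
        rw [Measure.volume_pi_eq_dirac]
        simp
      rw [measureReal_def, hv]
      norm_num
  | succ m _ =>
      have hTind : ∀ (i : Fin (m+1)) (v : Fin (m+1) → ℝ), (∏ j, Kf (v i) (v j)) =
          ind (∀ j, ((v i ≤ v j ∧ v j ≤ v i + 1) ∧ v j ∈ Icc (-1:ℝ) 1)) := fun i v =>
        prod_ind _
      have hTmeas : ∀ i : Fin (m+1), MeasurableSet {v : Fin (m+1) → ℝ |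
          ∀ j, ((v i ≤ v j ∧ v j ≤ v i + 1) ∧ v j ∈ Icc (-1:ℝ) 1)} := by
        intro i
        rw [setOf_forall]
        refine MeasurableSet.iInter fun j => ?_
        rw [setOf_and, setOf_and]
        exact ((measurableSet_le (measurable_pi_apply i) (measurable_pi_apply j)).inter
          (measurableSet_le (measurable_pi_apply j) ((measurable_pi_apply i).add_const 1))).inter
          ((measurable_pi_apply j) measurableSet_Icc)
      have hTint : ∀ i : Fin (m+1), Integrable (fun v : Fin (m+1) → ℝ => ∏ j, Kf (v i) (v j)) := by
        intro i
        rw [funext (hTind i)]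
        refine integrable_ind (hTmeas i) ?_
        refine lt_of_le_of_lt (measure_mono (fun v hv => ?_))
          (?_ : volume (univ.pi fun _ : Fin (m+1) => Icc (-1:ℝ) 1) < ⊤)
        · exact fun j _ => (hv j).2
        · rw [volume_pi, Measure.pi_pi]
          exact ENNReal.prod_lt_top fun _ _ => by simp [Real.volume_Icc]
      have hpt : ∀ v : Fin (m+1) → ℝ,
          ind (∀ i j : Fin (m+1), |v i - v j| ≤ 1) * ∏ i, ind (v i ∈ Icc (-1:ℝ) 1)
          ≤ ∑ i, ∏ j, Kf (v i) (v j) := by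
        intro v
        have hsnn : (0:ℝ) ≤ ∑ i, ∏ j, Kf (v i) (v j) :=
          Finset.sum_nonneg fun i _ => Finset.prod_nonneg fun j _ => Kf_nonneg _ _
        by_cases hbox : ∀ j, v j ∈ Icc (-1:ℝ) 1
        · by_cases hdiam : ∀ i j : Fin (m+1), |v i - v j| ≤ 1
          · obtain ⟨i0, _, hmin⟩ := Finset.exists_min_image Finset.univ v
              ⟨0, Finset.mem_univ 0⟩
            have hTi0 : (∏ j, Kf (v i0) (v j)) = 1 := by
              rw [hTind]
              refine ind_of fun j => ⟨⟨hmin j (Finset.mem_univ j), ?_⟩, hbox j⟩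
              have h2 := (abs_le.1 (hdiam j i0)).2
              linarith
            have hle : (1:ℝ) ≤ ∑ i, ∏ j, Kf (v i) (v j) := by
              rw [← hTi0]
              exact Finset.single_le_sum (f := fun i => ∏ j, Kf (v i) (v j))
                (fun i _ => Finset.prod_nonneg fun j _ => Kf_nonneg _ _) (Finset.mem_univ i0)
            calc ind (∀ i j : Fin (m+1), |v i - v j| ≤ 1) * ∏ i, ind (v i ∈ Icc (-1:ℝ) 1)
                = 1 := by rw [ind_of hdiam, one_mul, prod_ind, ind_of hbox]
              _ ≤ _ := hle
          · rw [ind_of_not hdiam, zero_mul]; exact hsnn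
        · have hz : (∏ i, ind (v i ∈ Icc (-1:ℝ) 1)) = 0 := by
            rw [prod_ind]; exact ind_of_not hbox
          rw [hz, mul_zero]; exact hsnn
      have hsum : ∫ v : Fin (m+1) → ℝ,
          (ind (∀ i j : Fin (m+1), |v i - v j| ≤ 1) * ∏ i, ind (v i ∈ Icc (-1:ℝ) 1))
          ≤ ∑ i : Fin (m+1), ∫ v : Fin (m+1) → ℝ, ∏ j, Kf (v i) (v j) := by
        have h1 := integral_mono_of_nonneg
          (Filter.Eventually.of_forall fun v : Fin (m+1) → ℝ =>
            mul_nonneg (ind_nonneg _) (Finset.prod_nonneg fun i _ => ind_nonneg _))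
          (integrable_finset_sum Finset.univ (fun i _ => hTint i))
          (Filter.Eventually.of_forall hpt)
        rwa [integral_finset_sum Finset.univ (fun i _ => hTint i)] at h1
      refine hsum.trans ?_
      calc ∑ i : Fin (m+1), ∫ v : Fin (m+1) → ℝ, ∏ j, Kf (v i) (v j)
          ≤ ∑ _i : Fin (m+1), (1 + 1/((m:ℝ)+1)) :=
            Finset.sum_le_sum fun i _ => term_bound m i
        _ = ((m:ℝ)+1) * (1 + 1/((m:ℝ)+1)) := by
            rw [Finset.sum_const, Finset.card_univ, Fintype.card_fin]
            push_cast
            ring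
        _ ≤ ((m+1:ℕ):ℝ) + 1 := by
            have hm : ((m:ℝ)+1) ≠ 0 := by positivity
            push_cast
            rw [mul_add, mul_one, mul_one_div, div_self hm]

open MeasureTheory Set in
lemma coreD (n d : ℕ) :
    ∫ y in (Set.univ.pi fun _ : Fin n => Set.univ.pi fun _ : Fin d => Set.Icc (-1:ℝ) 1),
      ind (closeP 1 (Set.range y)) ≤ ((n:ℝ)+1)^d := by
  set A := Set.univ.pi fun _ : Fin n => Set.univ.pi fun _ : Fin d => Set.Icc (-1:ℝ) 1 with hA
  have hmeasA : MeasurableSet A :=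
    MeasurableSet.univ_pi fun _ => MeasurableSet.univ_pi fun _ => measurableSet_Icc
  set H : (Fin n → ℝ) → ℝ := fun v => ind (∀ i j : Fin n, |v i - v j| ≤ 1) *
    ∏ i, ind (v i ∈ Icc (-1:ℝ) 1) with hH
  have hpt : ∀ y : Fin n → Fin d → ℝ,
      A.indicator (fun y => ind (closeP 1 (Set.range y))) y
      = ∏ c : Fin d, H (fun i => y i c) := by
    intro y
    have hclose : closeP 1 (Set.range y) ↔ ∀ c : Fin d, ∀ i j : Fin n, |y i c - y j c| ≤ 1 := by
      constructor
      · intro h c i j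
        have h2 := h (y i) ⟨i, rfl⟩ (y j) ⟨j, rfl⟩
        have h3 := (pi_norm_le_iff_of_nonneg (by norm_num : (0:ℝ) ≤ 1)).1 h2 c
        simpa [Real.norm_eq_abs] using h3
      · rintro h a ⟨i, rfl⟩ b ⟨j, rfl⟩
        rw [pi_norm_le_iff_of_nonneg (by norm_num : (0:ℝ) ≤ 1)]
        intro c
        simpa [Real.norm_eq_abs] using h c i j
    by_cases hy : y ∈ A
    · rw [indicator_of_mem hy]
      have h1 : ind (closeP 1 (Set.range y))
          = ∏ c : Fin d, ind (∀ i j : Fin n, |y i c - y j c| ≤ 1) := by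
        rw [ind_congr hclose, ← prod_ind]
      have h2 : ∀ (i : Fin n) (c : Fin d), y i c ∈ Icc (-1:ℝ) 1 := fun i c =>
        hy i (mem_univ i) c (mem_univ c)
      rw [h1]
      refine Finset.prod_congr rfl fun c _ => ?_
      rw [hH]
      have h3 : (∏ i : Fin n, ind (y i c ∈ Icc (-1:ℝ) 1)) = 1 := by
        rw [prod_ind]; exact ind_of (fun i => h2 i c)
      dsimp only
      rw [h3, mul_one]
    · rw [indicator_of_notMem hy]
      symm
      rw [hA] at hy
      simp only [mem_pi, mem_univ, forall_true_left, true_implies, not_forall] at hy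
      obtain ⟨i, c, hic⟩ := hy
      refine Finset.prod_eq_zero (Finset.mem_univ c) ?_
      rw [hH]
      dsimp only
      have h3 : (∏ i' : Fin n, ind (y i' c ∈ Icc (-1:ℝ) 1)) = 0 := by
        rw [prod_ind]
        exact ind_of_not (fun hall => hic (hall i))
      rw [h3, mul_zero]
  rw [← integral_indicator hmeasA]
  calc ∫ y : Fin n → Fin d → ℝ, A.indicator (fun y => ind (closeP 1 (Set.range y))) y
      = ∫ y : Fin n → Fin d → ℝ, ∏ c : Fin d, H (fun i => y i c) :=
        integral_congr_ae (Filter.Eventually.of_forall hpt)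
    _ = ∫ x : Fin d → Fin n → ℝ, ∏ c : Fin d, H (x c) :=
        (swapMP n d).integral_comp' (fun x => ∏ c : Fin d, H (x c))
    _ = (∫ v : Fin n → ℝ, H v) ^ d := by
        rw [volume_pi, MeasureTheory.integral_fintype_prod_eq_pow (ι := Fin d) H, Fintype.card_fin]
    _ ≤ ((n:ℝ)+1)^d := by
        refine pow_le_pow_left₀ (integral_nonneg fun v => ?_) (core1 n) d
        exact mul_nonneg (ind_nonneg _) (Finset.prod_nonneg fun i _ => ind_nonneg _)

open MeasureTheory Set in
lemma measP (n d : ℕ) : MeasurableSet {y : Fin n → Fin d → ℝ | closeP 1 (Set.range y)} := by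
  have h : {y : Fin n → Fin d → ℝ | closeP 1 (Set.range y)}
      = ⋂ i, ⋂ j, {y : Fin n → Fin d → ℝ | ‖y i - y j‖ ≤ 1} := by
    ext y
    simp only [mem_setOf_eq, mem_iInter]
    constructor
    · intro h i j; exact h (y i) ⟨i, rfl⟩ (y j) ⟨j, rfl⟩
    · rintro h a ⟨i, rfl⟩ b ⟨j, rfl⟩; exact h i j
  rw [h]
  refine MeasurableSet.iInter fun i => MeasurableSet.iInter fun j => ?_
  exact measurableSet_le
    (((measurable_pi_apply i).sub (measurable_pi_apply j)).norm) measurable_const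

open MeasureTheory Set in
lemma finA (n d : ℕ) :
    volume (Set.univ.pi fun _ : Fin n => Set.univ.pi fun _ : Fin d => Set.Icc (-1:ℝ) 1) < ⊤ := by
  rw [volume_pi, Measure.pi_pi]
  refine ENNReal.prod_lt_top fun _ _ => ?_
  rw [volume_pi, Measure.pi_pi]
  exact ENNReal.prod_lt_top fun _ _ => by simp [Real.volume_Icc]

lemma closeP_anti {d : ℕ} {δ : ℝ} {P Q : Set (Fin d → ℝ)} (h : Q ⊆ P) :
    closeP δ P → closeP δ Q := fun hp a ha b hb => hp a (h ha) b (h hb)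

open MeasureTheory Set in
lemma setIntegral_closeP_nonneg {n d : ℕ}
    (s : Set (Fin n → Fin d → ℝ)) :
    0 ≤ ∫ y in s, ind (closeP 1 (Set.range y)) :=
  integral_nonneg (fun _ => ind_nonneg _)

lemma mul4_le (a b c e b2 c2 e2 : ℝ) (ha : 0 ≤ a) (hb0 : 0 ≤ b) (hc0 : 0 ≤ c)
    (he0 : 0 ≤ e) (hb : b ≤ b2) (hc : c ≤ c2) (he : e ≤ e2)
    (hb2 : 0 ≤ b2) (hc2 : 0 ≤ c2) (he2 : 0 ≤ e2) :
    a * b * c * e ≤ a * (b2 * (c2 * e2)) := by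
  have h1 : b * (c * e) ≤ b2 * (c2 * e2) :=
    mul_le_mul hb (mul_le_mul hc he he0 hc2) (mul_nonneg hc0 he0) hb2
  calc a * b * c * e = a * (b * (c * e)) := by ring
    _ ≤ a * (b2 * (c2 * e2)) := mul_le_mul_of_nonneg_left h1 ha


open MeasureTheory Set in
/-- For all integers `d ≥ 1`, `k ≥ 1`, `0 ≤ r ≤ k`, `0 ≤ s_Y ≤ k`,
`0 ≤ s_Z ≤ min(k−r, k−s_Y)`, `0 ≤ m_Y ≤ k`, `0 ≤ m_Z ≤ min(k−r, k−m_Y)`,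
`0 ≤ m_W ≤ min(k−s, k−m_Y−m_Z)`, with `s := s_Y + s_Z` and `m := m_Y + m_Z + m_W`,
`∫_{(B)^{4k−r−s−m}} h_1(y) · h_1(y_{<r}, z) · h_1(y_{<s_Y}, z_{<s_Z}, w)
  · h_1(y_{<m_Y}, z_{<m_Z}, w_{<m_W}, u) dy dz dw du
  ≤ ((k+1)(k−r+1)(k−s+1)(k−m+1))^d`, where `B = [−1,1]^d ⊂ ℝ^d` with the `ℓ^∞` norm. -/
theorem stmt12 (d k r sY sZ mY mZ mW : ℕ) (hd : 1 ≤ d) (hk : 1 ≤ k)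
    (hr : r ≤ k) (hsY : sY ≤ k) (hsZ : sZ ≤ min (k - r) (k - sY))
    (hmY : mY ≤ k) (hmZ : mZ ≤ min (k - r) (k - mY))
    (hmW : mW ≤ min (k - (sY + sZ)) (k - mY - mZ)) :
    (∫ p in ((Set.univ.pi fun _ : Fin k =>
                (Set.univ.pi fun _ : Fin d => Set.Icc (-1 : ℝ) 1)) ×ˢ
             ((Set.univ.pi fun _ : Fin (k - r) =>
                (Set.univ.pi fun _ : Fin d => Set.Icc (-1 : ℝ) 1)) ×ˢ
              ((Set.univ.pi fun _ : Fin (k - (sY + sZ)) =>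
                (Set.univ.pi fun _ : Fin d => Set.Icc (-1 : ℝ) 1)) ×ˢ
               (Set.univ.pi fun _ : Fin (k - (mY + mZ + mW)) =>
                (Set.univ.pi fun _ : Fin d => Set.Icc (-1 : ℝ) 1))))),
      ind (closeP 1 (Set.range p.1)) *
      ind (closeP 1 ((p.1 '' {i : Fin k | (i : ℕ) < r}) ∪ Set.range p.2.1)) *
      ind (closeP 1 ((p.1 '' {i : Fin k | (i : ℕ) < sY}) ∪
                     (p.2.1 '' {i : Fin (k - r) | (i : ℕ) < sZ}) ∪ Set.range p.2.2.1)) *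
      ind (closeP 1 ((p.1 '' {i : Fin k | (i : ℕ) < mY}) ∪
                     (p.2.1 '' {i : Fin (k - r) | (i : ℕ) < mZ}) ∪
                     (p.2.2.1 '' {i : Fin (k - (sY + sZ)) | (i : ℕ) < mW}) ∪
                     Set.range p.2.2.2)))
      ≤ (((k : ℝ) + 1) * ((k : ℝ) - (r : ℝ) + 1) *
          ((k : ℝ) - ((sY : ℝ) + (sZ : ℝ)) + 1) *
          ((k : ℝ) - ((mY : ℝ) + (mZ : ℝ) + (mW : ℝ)) + 1)) ^ d := by
  classical
  have hs' : sY + sZ ≤ k := by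
    have := hsZ.trans (min_le_right _ _); omega
  have hm' : mY + mZ + mW ≤ k := by
    have h1 := hmZ.trans (min_le_right _ _)
    have h2 := hmW.trans (min_le_right _ _)
    omega
  set A1 := Set.univ.pi fun _ : Fin k => (Set.univ.pi fun _ : Fin d => Set.Icc (-1 : ℝ) 1)
    with hA1
  set A2 := Set.univ.pi fun _ : Fin (k - r) =>
    (Set.univ.pi fun _ : Fin d => Set.Icc (-1 : ℝ) 1) with hA2
  set A3 := Set.univ.pi fun _ : Fin (k - (sY + sZ)) =>
    (Set.univ.pi fun _ : Fin d => Set.Icc (-1 : ℝ) 1) with hA3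
  set A4 := Set.univ.pi fun _ : Fin (k - (mY + mZ + mW)) =>
    (Set.univ.pi fun _ : Fin d => Set.Icc (-1 : ℝ) 1) with hA4
  set f1 : (Fin k → Fin d → ℝ) → ℝ := fun y => ind (closeP 1 (Set.range y)) with hf1
  set f2 : (Fin (k - r) → Fin d → ℝ) → ℝ := fun y => ind (closeP 1 (Set.range y)) with hf2
  set f3 : (Fin (k - (sY + sZ)) → Fin d → ℝ) → ℝ := fun y => ind (closeP 1 (Set.range y))
    with hf3
  set f4 : (Fin (k - (mY + mZ + mW)) → Fin d → ℝ) → ℝ := fun y => ind (closeP 1 (Set.range y))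
    with hf4
  set S := A1 ×ˢ (A2 ×ˢ (A3 ×ˢ A4)) with hS
  set g : (Fin k → Fin d → ℝ) ×
      ((Fin (k - r) → Fin d → ℝ) ×
        ((Fin (k - (sY + sZ)) → Fin d → ℝ) × (Fin (k - (mY + mZ + mW)) → Fin d → ℝ))) → ℝ :=
    fun p => f1 p.1 * (f2 p.2.1 * (f3 p.2.2.1 * f4 p.2.2.2)) with hg
  have hSfin : volume S < ⊤ := by
    rw [hS, Measure.volume_eq_prod, Measure.prod_prod, Measure.volume_eq_prod,
      Measure.prod_prod, Measure.volume_eq_prod, Measure.prod_prod]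
    exact ENNReal.mul_lt_top (finA _ _) (ENNReal.mul_lt_top (finA _ _)
      (ENNReal.mul_lt_top (finA _ _) (finA _ _)))
  haveI : IsFiniteMeasure (volume.restrict S) :=
    ⟨by rw [Measure.restrict_apply_univ]; exact hSfin⟩
  have hgmeas : Measurable g := by
    refine Measurable.mul ?_ (Measurable.mul ?_ (Measurable.mul ?_ ?_))
    · exact (measurable_ind (measP k d)).comp measurable_fst
    · exact (measurable_ind (measP (k - r) d)).comp (measurable_fst.comp measurable_snd)
    · exact (measurable_ind (measP (k - (sY + sZ)) d)).comp
        (measurable_fst.comp (measurable_snd.comp measurable_snd))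
    · exact (measurable_ind (measP (k - (mY + mZ + mW)) d)).comp
        (measurable_snd.comp (measurable_snd.comp measurable_snd))
  have hgint : Integrable g (volume.restrict S) := by
    refine Integrable.mono' (integrable_const 1) hgmeas.aestronglyMeasurable
      (Filter.Eventually.of_forall fun p => ?_)
    have h0 : 0 ≤ g p := by
      rw [hg]
      exact mul_nonneg (ind_nonneg _) (mul_nonneg (ind_nonneg _)
        (mul_nonneg (ind_nonneg _) (ind_nonneg _)))
    have h1 : g p ≤ 1 := by
      rw [hg]
      dsimp only
      rw [hf1, hf2, hf3, hf4]
      dsimp only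
      rw [ind_mul_ind, ind_mul_ind, ind_mul_ind]
      exact ind_le_one _
    rw [Real.norm_eq_abs, abs_of_nonneg h0]
    exact h1
  have hmono : (∫ p in S,
      ind (closeP 1 (Set.range p.1)) *
      ind (closeP 1 ((p.1 '' {i : Fin k | (i : ℕ) < r}) ∪ Set.range p.2.1)) *
      ind (closeP 1 ((p.1 '' {i : Fin k | (i : ℕ) < sY}) ∪
                     (p.2.1 '' {i : Fin (k - r) | (i : ℕ) < sZ}) ∪ Set.range p.2.2.1)) *
      ind (closeP 1 ((p.1 '' {i : Fin k | (i : ℕ) < mY}) ∪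
                     (p.2.1 '' {i : Fin (k - r) | (i : ℕ) < mZ}) ∪
                     (p.2.2.1 '' {i : Fin (k - (sY + sZ)) | (i : ℕ) < mW}) ∪
                     Set.range p.2.2.2)))
      ≤ ∫ p in S, g p := by
    refine integral_mono_of_nonneg (Filter.Eventually.of_forall fun p => ?_) hgint
      (Filter.Eventually.of_forall fun p => ?_)
    · exact mul_nonneg (mul_nonneg (mul_nonneg (ind_nonneg _) (ind_nonneg _)) (ind_nonneg _))
        (ind_nonneg _)
    · have hb : ind (closeP 1 ((p.1 '' {i : Fin k | (i : ℕ) < r}) ∪ Set.range p.2.1))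
          ≤ f2 p.2.1 := ind_mono (closeP_anti Set.subset_union_right)
      have hc : ind (closeP 1 ((p.1 '' {i : Fin k | (i : ℕ) < sY}) ∪
          (p.2.1 '' {i : Fin (k - r) | (i : ℕ) < sZ}) ∪ Set.range p.2.2.1))
          ≤ f3 p.2.2.1 := ind_mono (closeP_anti Set.subset_union_right)
      have hdd : ind (closeP 1 ((p.1 '' {i : Fin k | (i : ℕ) < mY}) ∪
          (p.2.1 '' {i : Fin (k - r) | (i : ℕ) < mZ}) ∪
          (p.2.2.1 '' {i : Fin (k - (sY + sZ)) | (i : ℕ) < mW}) ∪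
          Set.range p.2.2.2)) ≤ f4 p.2.2.2 := ind_mono (closeP_anti Set.subset_union_right)
      exact mul4_le _ _ _ _ _ _ _ (ind_nonneg _) (ind_nonneg _) (ind_nonneg _)
        (ind_nonneg _) hb hc hdd (ind_nonneg _) (ind_nonneg _) (ind_nonneg _)
  have hsplit : ∫ p in S, g p
      = (∫ y in A1, f1 y) * ((∫ y in A2, f2 y) * ((∫ y in A3, f3 y) * (∫ y in A4, f4 y))) := by
    rw [hS, hg]
    rw [Measure.volume_eq_prod,
      setIntegral_prod_mul f1 (fun q => f2 q.1 * (f3 q.2.1 * f4 q.2.2)) A1 (A2 ×ˢ (A3 ×ˢ A4))]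
    congr 1
    rw [Measure.volume_eq_prod,
      setIntegral_prod_mul f2 (fun q => f3 q.1 * f4 q.2) A2 (A3 ×ˢ A4)]
    congr 1
    rw [Measure.volume_eq_prod, setIntegral_prod_mul f3 f4 A3 A4]
  refine hmono.trans ?_
  rw [hsplit]
  have b1 : ∫ y in A1, f1 y ≤ ((k:ℝ)+1)^d := coreD k d
  have b2 : ∫ y in A2, f2 y ≤ (((k-r:ℕ):ℝ)+1)^d := coreD (k-r) d
  have b3 : ∫ y in A3, f3 y ≤ (((k-(sY+sZ):ℕ):ℝ)+1)^d := coreD (k-(sY+sZ)) d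
  have b4 : ∫ y in A4, f4 y ≤ (((k-(mY+mZ+mW):ℕ):ℝ)+1)^d := coreD (k-(mY+mZ+mW)) d
  have n1 : 0 ≤ ∫ y in A1, f1 y := setIntegral_closeP_nonneg _
  have n2 : 0 ≤ ∫ y in A2, f2 y := setIntegral_closeP_nonneg _
  have n3 : 0 ≤ ∫ y in A3, f3 y := setIntegral_closeP_nonneg _
  have n4 : 0 ≤ ∫ y in A4, f4 y := setIntegral_closeP_nonneg _
  have hfin : (∫ y in A1, f1 y) * ((∫ y in A2, f2 y) * ((∫ y in A3, f3 y) * (∫ y in A4, f4 y)))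
      ≤ ((k:ℝ)+1)^d * ((((k-r:ℕ):ℝ)+1)^d * ((((k-(sY+sZ):ℕ):ℝ)+1)^d *
        ((((k-(mY+mZ+mW):ℕ):ℝ)+1)^d))) := by
    refine mul_le_mul b1 ?_ (mul_nonneg n2 (mul_nonneg n3 n4)) (by positivity)
    refine mul_le_mul b2 ?_ (mul_nonneg n3 n4) (by positivity)
    exact mul_le_mul b3 b4 n4 (by positivity)
  refine hfin.trans ?_
  have c2 : ((k - r : ℕ) : ℝ) = (k:ℝ) - r := by
    rw [Nat.cast_sub hr]
  have c3 : ((k - (sY + sZ) : ℕ) : ℝ) = (k:ℝ) - ((sY:ℝ) + (sZ:ℝ)) := by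
    rw [Nat.cast_sub hs']; push_cast; ring
  have c4 : ((k - (mY + mZ + mW) : ℕ) : ℝ) = (k:ℝ) - ((mY:ℝ) + (mZ:ℝ) + (mW:ℝ)) := by
    rw [Nat.cast_sub hm']; push_cast; ring
  rw [c2, c3, c4]
  rw [← mul_pow, ← mul_pow, ← mul_pow]
  apply le_of_eq
  ring
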